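/- arXiv:2505.14249 — 2 statements merged into one kernel-verified Lean document; each statement's English description precedes it below -/
import Mathlib

section
/- Let R be a finite ring with identity. For every vertex x = (e, u) of the graph Cl₂(R), the degree of x equals |Id(R)| + O_e·(|U(R)| − 1) − 2 if u² = 1, and |Id(R)| + O_e·(|U(R)| − 1) − 1 if u² ≠ 1, where O_e = |{f ∈ Id(R) \ {0} : ef = fe = 0}|. -/
/-- The clean graph `Cl₂(R)`: vertices are pairs `(e, u)` with `e` a nonzero
idempotent and `u` a unit; distinct vertices `(e,u)`, `(f,v)` are adjacent iff
`ef = fe = 0` or `uv = vu = 1`. -/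
def Cl2 (R : Type*) [Ring R] :
    SimpleGraph ({e : R // e ^ 2 = e ∧ e ≠ 0} × Rˣ) where
  Adj x y := x ≠ y ∧
    ((x.1.1 * y.1.1 = 0 ∧ y.1.1 * x.1.1 = 0) ∨ (x.2 * y.2 = 1 ∧ y.2 * x.2 = 1))
  symm := by
    constructor
    rintro x y ⟨hne, h⟩
    exact ⟨hne.symm, by tauto⟩
  loopless := by constructor; rintro x ⟨hne, -⟩; exact hne rfl

lemma stmt_13_aux {R : Type*} [Ring R] [Fintype R]
    (e : {e : R // e ^ 2 = e ∧ e ≠ 0}) (u : Rˣ) :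
    (u ^ 2 = 1 →
      Nat.card {y // (Cl2 R).Adj (e, u) y} =
        Nat.card {e : R // e ^ 2 = e} +
          Nat.card {f : R // (f ^ 2 = f ∧ f ≠ 0) ∧ e.1 * f = 0 ∧ f * e.1 = 0} *
            (Nat.card Rˣ - 1) - 2) ∧
    (u ^ 2 ≠ 1 →
      Nat.card {y // (Cl2 R).Adj (e, u) y} =
        Nat.card {e : R // e ^ 2 = e} +
          Nat.card {f : R // (f ^ 2 = f ∧ f ≠ 0) ∧ e.1 * f = 0 ∧ f * e.1 = 0} *
            (Nat.card Rˣ - 1) - 1) := by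
  classical
  -- e itself is not "orthogonal" to e
  have hPe : ¬ (e.1 * e.1 = 0 ∧ e.1 * e.1 = 0) := by
    rintro ⟨h1, -⟩
    exact e.2.2 (by rw [← e.2.1, sq]; exact h1)
  have hPe' : ∀ f : {e : R // e ^ 2 = e ∧ e ≠ 0}, (e.1 * f.1 = 0 ∧ f.1 * e.1 = 0) → f ≠ e := by
    rintro f ⟨h1, h2⟩ rfl
    exact hPe ⟨h1, h2⟩
  -- adjacency characterization
  have hadj : ∀ y : {e : R // e ^ 2 = e ∧ e ≠ 0} × Rˣ, (Cl2 R).Adj (e, u) y ↔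
      ((e.1 * y.1.1 = 0 ∧ y.1.1 * e.1 = 0) ∨
        (y.2 = u⁻¹ ∧ ((y.1 ≠ e ∨ u⁻¹ ≠ u) ∧ ¬ (e.1 * y.1.1 = 0 ∧ y.1.1 * e.1 = 0)))) := by
    intro y
    constructor
    · rintro ⟨hne, h | h⟩
      · exact Or.inl h
      · by_cases hp : (e.1 * y.1.1 = 0 ∧ y.1.1 * e.1 = 0)
        · exact Or.inl hp
        · refine Or.inr ⟨eq_inv_of_mul_eq_one_right h.1, ?_, hp⟩
          by_contra hc
          push_neg at hc
          obtain ⟨h1, h2⟩ := hc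
          apply hne
          have : y.2 = u := by rw [eq_inv_of_mul_eq_one_right h.1, h2]
          exact Prod.ext h1.symm this.symm
    · rintro (hp | ⟨hv, hne, hnp⟩)
      · refine ⟨?_, Or.inl hp⟩
        rintro rfl
        exact hPe hp
      · refine ⟨?_, Or.inr ⟨by rw [hv]; exact mul_inv_cancel u, by rw [hv]; exact inv_mul_cancel u⟩⟩
        intro h
        rcases hne with hne | hne
        · exact hne (congrArg Prod.fst h).symm
        · have hy2 : u = y.2 := congrArg Prod.snd h
          rw [hv] at hy2
          exact hne hy2.symm
  -- split the neighbor set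
  have hdisj : Disjoint
      (fun y : {e : R // e ^ 2 = e ∧ e ≠ 0} × Rˣ => (e.1 * y.1.1 = 0 ∧ y.1.1 * e.1 = 0))
      (fun y : {e : R // e ^ 2 = e ∧ e ≠ 0} × Rˣ =>
        y.2 = u⁻¹ ∧ ((y.1 ≠ e ∨ u⁻¹ ≠ u) ∧ ¬ (e.1 * y.1.1 = 0 ∧ y.1.1 * e.1 = 0))) := by
    rw [Pi.disjoint_iff]
    intro y
    rw [Prop.disjoint_iff]
    tauto
  have hsplit : Nat.card {y // (Cl2 R).Adj (e, u) y} =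
      Nat.card {y : {e : R // e ^ 2 = e ∧ e ≠ 0} × Rˣ // e.1 * y.1.1 = 0 ∧ y.1.1 * e.1 = 0} +
        Nat.card {y : {e : R // e ^ 2 = e ∧ e ≠ 0} × Rˣ //
          y.2 = u⁻¹ ∧ ((y.1 ≠ e ∨ u⁻¹ ≠ u) ∧ ¬ (e.1 * y.1.1 = 0 ∧ y.1.1 * e.1 = 0))} := by
    rw [Nat.card_congr (Equiv.subtypeEquivRight hadj),
      Nat.card_congr (subtypeOrEquiv _ _ hdisj), Nat.card_sum]
  -- card of the S-level orthogonality set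
  have hOcard : Nat.card {f : {e : R // e ^ 2 = e ∧ e ≠ 0} // e.1 * f.1 = 0 ∧ f.1 * e.1 = 0} =
      Nat.card {f : R // (f ^ 2 = f ∧ f ≠ 0) ∧ e.1 * f = 0 ∧ f * e.1 = 0} :=
    Nat.card_congr (Equiv.subtypeSubtypeEquivSubtypeInter
      (fun f : R => f ^ 2 = f ∧ f ≠ 0) (fun f : R => e.1 * f = 0 ∧ f * e.1 = 0))
  -- first summand
  have hA : Nat.card {y : {e : R // e ^ 2 = e ∧ e ≠ 0} × Rˣ //
      e.1 * y.1.1 = 0 ∧ y.1.1 * e.1 = 0} =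
      Nat.card {f : R // (f ^ 2 = f ∧ f ≠ 0) ∧ e.1 * f = 0 ∧ f * e.1 = 0} * Nat.card Rˣ := by
    rw [Nat.card_congr (Equiv.prodSubtypeFstEquivSubtypeProd
      (p := fun f : {e : R // e ^ 2 = e ∧ e ≠ 0} => e.1 * f.1 = 0 ∧ f.1 * e.1 = 0)),
      Nat.card_prod, hOcard]
  -- second summand reduces to a subtype of nonzero idempotents
  have hB : ∀ r : {e : R // e ^ 2 = e ∧ e ≠ 0} → Prop,
      Nat.card {y : {e : R // e ^ 2 = e ∧ e ≠ 0} × Rˣ // y.2 = u⁻¹ ∧ r y.1} =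
        Nat.card {f : {e : R // e ^ 2 = e ∧ e ≠ 0} // r f} := by
    intro r
    refine Nat.card_congr ⟨fun y => ⟨y.1.1, y.2.2⟩, fun f => ⟨(f.1, u⁻¹), rfl, f.2⟩, ?_, ?_⟩
    · rintro ⟨⟨f, v⟩, h1, h2⟩
      exact Subtype.ext (Prod.ext rfl h1.symm)
    · intro f; rfl
  -- card of nonzero idempotents vs all idempotents
  have hzero : Nat.card {g : {e : R // e ^ 2 = e} // ¬ g.1 ≠ 0} = 1 := by
    have : Unique {g : {e : R // e ^ 2 = e} // ¬ g.1 ≠ 0} := by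
      refine ⟨⟨⟨⟨0, by simp⟩, by simp⟩⟩, ?_⟩
      rintro ⟨⟨f, hf⟩, h⟩
      simp only [not_not] at h
      apply Subtype.ext; apply Subtype.ext; exact h
    exact Nat.card_unique
  have hScard : Nat.card {e : R // e ^ 2 = e ∧ e ≠ 0} + 1 = Nat.card {e : R // e ^ 2 = e} := by
    have h1 : Nat.card {g : {e : R // e ^ 2 = e} // g.1 ≠ 0} =
        Nat.card {e : R // e ^ 2 = e ∧ e ≠ 0} :=
      Nat.card_congr (Equiv.subtypeSubtypeEquivSubtypeInter
        (fun f : R => f ^ 2 = f) (fun f : R => f ≠ 0))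
    have h2 : Nat.card {g : {e : R // e ^ 2 = e} // g.1 ≠ 0} +
        Nat.card {g : {e : R // e ^ 2 = e} // ¬ g.1 ≠ 0} = Nat.card {e : R // e ^ 2 = e} := by
      rw [← Nat.card_sum]
      exact Nat.card_congr (Equiv.sumCompl _)
    rw [← h2, h1, hzero]
  have hU1 : 1 ≤ Nat.card Rˣ := Nat.card_pos
  have hmul : Nat.card {f : R // (f ^ 2 = f ∧ f ≠ 0) ∧ e.1 * f = 0 ∧ f * e.1 = 0} * Nat.card Rˣ =
      Nat.card {f : R // (f ^ 2 = f ∧ f ≠ 0) ∧ e.1 * f = 0 ∧ f * e.1 = 0} *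
        (Nat.card Rˣ - 1) +
        Nat.card {f : R // (f ^ 2 = f ∧ f ≠ 0) ∧ e.1 * f = 0 ∧ f * e.1 = 0} := by
    conv_lhs => rw [← Nat.sub_add_cancel hU1]
    ring
  constructor
  · -- case u ^ 2 = 1
    intro hu2
    have huinv : u⁻¹ = u := by
      rw [inv_eq_iff_mul_eq_one, ← sq, hu2]
    have hr : ∀ f : {e : R // e ^ 2 = e ∧ e ≠ 0},
        ((f ≠ e ∨ u⁻¹ ≠ u) ∧ ¬ (e.1 * f.1 = 0 ∧ f.1 * e.1 = 0)) ↔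
          ¬ ((e.1 * f.1 = 0 ∧ f.1 * e.1 = 0) ∨ f = e) := by
      intro f
      simp only [huinv, ne_eq, not_true_eq_false, or_false, not_or]
      tauto
    have hcompl : Nat.card {f : {e : R // e ^ 2 = e ∧ e ≠ 0} //
        ¬ ((e.1 * f.1 = 0 ∧ f.1 * e.1 = 0) ∨ f = e)} +
        Nat.card {f : {e : R // e ^ 2 = e ∧ e ≠ 0} //
          (e.1 * f.1 = 0 ∧ f.1 * e.1 = 0) ∨ f = e} =
        Nat.card {e : R // e ^ 2 = e ∧ e ≠ 0} := by
      rw [← Nat.card_sum]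
      exact Nat.card_congr ((Equiv.sumComm _ _).trans (Equiv.sumCompl _))
    have hdisj2 : Disjoint
        (fun f : {e : R // e ^ 2 = e ∧ e ≠ 0} => (e.1 * f.1 = 0 ∧ f.1 * e.1 = 0))
        (fun f : {e : R // e ^ 2 = e ∧ e ≠ 0} => f = e) := by
      rw [Pi.disjoint_iff]
      intro f
      rw [Prop.disjoint_iff]
      rintro ⟨hp, rfl⟩
      exact hPe hp
    have heq : Nat.card {f : {e : R // e ^ 2 = e ∧ e ≠ 0} //
        (e.1 * f.1 = 0 ∧ f.1 * e.1 = 0) ∨ f = e} =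
        Nat.card {f : R // (f ^ 2 = f ∧ f ≠ 0) ∧ e.1 * f = 0 ∧ f * e.1 = 0} + 1 := by
      rw [Nat.card_congr (subtypeOrEquiv _ _ hdisj2), Nat.card_sum, hOcard]
      congr 1
      have : Unique {f : {e : R // e ^ 2 = e ∧ e ≠ 0} // f = e} :=
        ⟨⟨⟨e, rfl⟩⟩, by rintro ⟨f, rfl⟩; rfl⟩
      exact Nat.card_unique
    rw [hsplit, hA, hB (fun f => (f ≠ e ∨ u⁻¹ ≠ u) ∧ ¬ (e.1 * f.1 = 0 ∧ f.1 * e.1 = 0)),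
      Nat.card_congr (Equiv.subtypeEquivRight hr)]
    omega
  · -- case u ^ 2 ≠ 1
    intro hu2
    have huinv : u⁻¹ ≠ u := by
      intro h
      apply hu2
      rw [sq]
      nth_rewrite 1 [← h]
      exact inv_mul_cancel u
    have hr : ∀ f : {e : R // e ^ 2 = e ∧ e ≠ 0},
        ((f ≠ e ∨ u⁻¹ ≠ u) ∧ ¬ (e.1 * f.1 = 0 ∧ f.1 * e.1 = 0)) ↔
          ¬ (e.1 * f.1 = 0 ∧ f.1 * e.1 = 0) := by
      intro f; tauto
    have hcompl : Nat.card {f : {e : R // e ^ 2 = e ∧ e ≠ 0} //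
        ¬ (e.1 * f.1 = 0 ∧ f.1 * e.1 = 0)} +
        Nat.card {f : {e : R // e ^ 2 = e ∧ e ≠ 0} // e.1 * f.1 = 0 ∧ f.1 * e.1 = 0} =
        Nat.card {e : R // e ^ 2 = e ∧ e ≠ 0} := by
      rw [← Nat.card_sum]
      exact Nat.card_congr ((Equiv.sumComm _ _).trans (Equiv.sumCompl _))
    rw [hsplit, hA, hB (fun f => (f ≠ e ∨ u⁻¹ ≠ u) ∧ ¬ (e.1 * f.1 = 0 ∧ f.1 * e.1 = 0)),
      Nat.card_congr (Equiv.subtypeEquivRight hr)]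
    omega

theorem stmt_13 {R : Type*} [Ring R] [Fintype R]
    (x : {e : R // e ^ 2 = e ∧ e ≠ 0} × Rˣ) :
    (x.2 ^ 2 = 1 →
      Nat.card {y // (Cl2 R).Adj x y} =
        Nat.card {e : R // e ^ 2 = e} +
          Nat.card {f : R // (f ^ 2 = f ∧ f ≠ 0) ∧ x.1.1 * f = 0 ∧ f * x.1.1 = 0} *
            (Nat.card Rˣ - 1) - 2) ∧
    (x.2 ^ 2 ≠ 1 →
      Nat.card {y // (Cl2 R).Adj x y} =
        Nat.card {e : R // e ^ 2 = e} +
          Nat.card {f : R // (f ^ 2 = f ∧ f ≠ 0) ∧ x.1.1 * f = 0 ∧ f * x.1.1 = 0} *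
            (Nat.card Rˣ - 1) - 1) := by
  simpa using stmt_13_aux x.1 x.2
end

section
/- Let G be a simple graph with at least one vertex, and let t, n be positive integers with 2 ≤ t ≤ n and n − t even. The (t,n)-shuriken graph Shu^t_n(G) is disconnected if and only if G has no edges. -/
/-- The `(t,n)`-shuriken graph of `G` (with `1`-indexed copies `1,…,n` of the
paper encoded as `Fin n`, `0`-indexed). A new vertex `z` (encoded `none`) is
added to `G`, and `n` copies are taken. Edges: copies of edges of `G` across
all pairs of copies; all edges within copy `i` for `i ≤ t`; and all edges
between copies `i` and `n + t + 1 - i` for `t + 1 ≤ i ≤ (n + t)/2`. -/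
def Shu (t n : ℕ) {V : Type*} (G : SimpleGraph V) :
    SimpleGraph (Fin n × Option V) where
  Adj x y :=
    (∃ u v, x.2 = some u ∧ y.2 = some v ∧ G.Adj u v) ∨
    (x.1 = y.1 ∧ x.1.val < t ∧ x.2 ≠ y.2) ∨
    (x.1 ≠ y.1 ∧ x.1.val + y.1.val = n + t - 1 ∧ t ≤ x.1.val ∧ t ≤ y.1.val)
  symm := by
    constructor
    rintro x y (⟨u, v, h1, h2, h3⟩ | ⟨h1, h2, h3⟩ | ⟨h1, h2, h3, h4⟩)
    · exact Or.inl ⟨v, u, h2, h1, h3.symm⟩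
    · exact Or.inr (Or.inl ⟨h1.symm, h1 ▸ h2, h3.symm⟩)
    · exact Or.inr (Or.inr ⟨h1.symm, by omega, h4, h3⟩)
  loopless := by
    constructor
    rintro x (⟨u, v, h1, h2, h3⟩ | ⟨h1, h2, h3⟩ | ⟨h1, h2, h3⟩)
    · rw [h1] at h2
      injection h2 with h
      exact G.irrefl (h ▸ h3)
    · exact h3 rfl
    · exact h1 rfl

theorem stmt_16 {V : Type*} (G : SimpleGraph V) (hV : Nonempty V)
    (t n : ℕ) (ht : 2 ≤ t) (htn : t ≤ n) (heven : Even (n - t)) :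
    ¬ (Shu t n G).Connected ↔ ∀ u v, ¬ G.Adj u v := by
  obtain ⟨k, hk⟩ := heven
  constructor
  · intro hdisc
    by_contra hE
    push_neg at hE
    obtain ⟨u, v, huv⟩ := hE
    apply hdisc
    have hn : 0 < n := by omega
    have reach : ∀ x : Fin n × Option V,
        (Shu t n G).Reachable x (⟨⟨0, hn⟩, some u⟩) := by
      rintro ⟨i, o⟩
      have step : ∃ j : Fin n, (Shu t n G).Reachable (i, o) (j, some u) := by
        by_cases hlt : i.val < t
        · refine ⟨i, ?_⟩
          rcases eq_or_ne o (some u) with rfl | hne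
          · exact SimpleGraph.Reachable.refl _
          · exact SimpleGraph.Adj.reachable (Or.inr (Or.inl ⟨rfl, hlt, hne⟩))
        · have hi := i.isLt
          refine ⟨⟨n + t - 1 - i.val, by omega⟩,
            SimpleGraph.Adj.reachable (Or.inr (Or.inr
              ⟨Fin.ne_of_val_ne (by simp; omega), by simp; omega, by simp; omega, by simp; omega⟩))⟩
      obtain ⟨j, hj⟩ := step
      refine hj.trans ((SimpleGraph.Adj.reachable
          (v := (⟨⟨0, hn⟩, some v⟩ : Fin n × Option V)) ?_).trans (SimpleGraph.Adj.reachable ?_))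
      · exact Or.inl ⟨u, v, rfl, rfl, huv⟩
      · exact Or.inl ⟨v, u, rfl, rfl, huv.symm⟩
    have : Nonempty (Fin n × Option V) := ⟨(⟨0, hn⟩, none)⟩
    exact ⟨fun x y => (reach x).trans (reach y).symm⟩
  · intro hE hconn
    have hn : 0 < n := by omega
    have h1 : 1 < n := by omega
    obtain ⟨p⟩ := hconn.preconnected (⟨⟨0, hn⟩, (none : Option V)⟩) (⟨⟨1, h1⟩, none⟩)
    have key : ∀ x y : Fin n × Option V, (Shu t n G).Walk x y → x.1.val = 0 → y.1.val = 0 := by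
      intro x y q
      induction q with
      | nil => exact id
      | cons h q ih =>
        intro hx
        apply ih
        rcases h with ⟨a, b, _, _, hab⟩ | ⟨hfst, _, _⟩ | ⟨_, _, h3, _⟩
        · exact absurd hab (hE a b)
        · exact hfst ▸ hx
        · omega
    have := key _ _ p rfl
    simp at this
end
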